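/- Let α > 1 and L > 0, and let m : [1, ∞) → [0, 1] be a monotonically decreasing function with lim_{x→∞} x^α m(x) = L. Then lim_{n→∞} n^{−1/α} ∫_1^∞ [1 − (1 − m(x))^n] dx = L^{1/α} Γ((α − 1)/α), where Γ is the Gamma function. -/

import Mathlib

open MeasureTheory Filter
open scoped Topology

section StmtNineAux

open Set Real

private lemma stmt9_log_one_sub_bound {a : ℝ} (h1 : a ≤ 1/2) (h0 : 0 ≤ a) :
    |Real.log (1 - a) + a| ≤ 2 * a ^ 2 := by
  have ha1 : (0:ℝ) < 1 - a := by linarith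
  rw [abs_le]
  constructor
  · have h2 : Real.log (1 - a)⁻¹ ≤ (1 - a)⁻¹ - 1 := Real.log_le_sub_one_of_pos (by positivity)
    rw [Real.log_inv] at h2
    have h3 : (1 - a)⁻¹ - 1 = a / (1 - a) := by field_simp; ring
    have h4 : a / (1 - a) ≤ a + 2 * a ^ 2 := by
      rw [div_le_iff₀ ha1]; nlinarith
    nlinarith [h2, h3.symm ▸ h2]
  · have h2 : Real.log (1 - a) ≤ (1 - a) - 1 := Real.log_le_sub_one_of_pos ha1
    nlinarith

private lemma stmt9_pow_tendsto_exp (a : ℕ → ℝ) (t : ℝ) (h0 : ∀ n, 0 ≤ a n)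
    (h1 : ∀ n, a n ≤ 1)
    (hlim : Tendsto (fun n : ℕ => (n : ℝ) * a n) atTop (𝓝 t)) :
    Tendsto (fun n => (1 - a n) ^ n) atTop (𝓝 (Real.exp (-t))) := by
  have hinv : Tendsto (fun n : ℕ => ((n : ℝ))⁻¹) atTop (𝓝 0) :=
    tendsto_inv_atTop_zero.comp tendsto_natCast_atTop_atTop
  have ha0 : Tendsto a atTop (𝓝 0) := by
    have := hlim.mul hinv
    rw [mul_zero] at this
    apply this.congr'
    filter_upwards [eventually_ge_atTop 1] with n hn
    have : (n:ℝ) ≠ 0 := by positivity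
    field_simp
  have hsmall : ∀ᶠ n in atTop, a n ≤ 1/2 :=
    ha0.eventually (eventually_le_nhds (show (0:ℝ) < 1/2 by norm_num))
  have herr : Tendsto (fun n : ℕ => (n:ℝ) * (Real.log (1 - a n) + a n)) atTop (𝓝 0) := by
    apply squeeze_zero_norm' (a := fun n : ℕ => 2 * ((n:ℝ) * a n) * a n)
    · filter_upwards [hsmall] with n hn
      calc ‖(n:ℝ) * (Real.log (1 - a n) + a n)‖
          = (n:ℝ) * |Real.log (1 - a n) + a n| := by
            rw [norm_mul, Real.norm_natCast, Real.norm_eq_abs]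
        _ ≤ (n:ℝ) * (2 * a n ^ 2) :=
            mul_le_mul_of_nonneg_left (stmt9_log_one_sub_bound hn (h0 n)) (Nat.cast_nonneg n)
        _ = 2 * ((n:ℝ) * a n) * a n := by ring
    · have := (hlim.const_mul 2).mul ha0
      simpa using this
  have hkey : Tendsto (fun n : ℕ => (n:ℝ) * Real.log (1 - a n)) atTop (𝓝 (-t)) := by
    have := herr.sub hlim
    rw [zero_sub] at this
    apply this.congr
    intro n; ring
  have := (Real.continuous_exp.tendsto _).comp hkey
  apply this.congr'
  filter_upwards [hsmall] with n hn
  have ha1 : (0:ℝ) < 1 - a n := by linarith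
  simp only [Function.comp_apply]
  rw [Real.exp_nat_mul, Real.exp_log ha1]

private lemma stmt9_exp_neg_le_one {t : ℝ} (ht : 0 ≤ t) : Real.exp (-t) ≤ 1 := by
  rw [← Real.exp_zero]; exact Real.exp_le_exp.mpr (by linarith)

private lemma stmt9_integrableOn_of_bounds {f g : ℝ → ℝ} {s : Set ℝ} (hs : MeasurableSet s)
    (hf : Measurable f) (hg : IntegrableOn g s) (h : ∀ y ∈ s, |f y| ≤ g y) :
    IntegrableOn f s := by
  apply Integrable.mono' hg hf.aestronglyMeasurable.restrict
  rw [ae_restrict_iff' hs]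
  filter_upwards with y hy
  rw [Real.norm_eq_abs]
  exact h y hy

private lemma stmt9_g_integrable {α L : ℝ} (hα : 1 < α) (hL : 0 < L) :
    IntegrableOn (fun y : ℝ => 1 - Real.exp (-L * y ^ (-α))) (Ioi (0:ℝ)) := by
  have hmeas : Measurable (fun y : ℝ => 1 - Real.exp (-L * y ^ (-α))) := by fun_prop
  rw [← Ioc_union_Ioi_eq_Ioi (zero_le_one (α := ℝ))]
  apply IntegrableOn.union
  · have hc : IntegrableOn (fun _ : ℝ => (1:ℝ)) (Ioc (0:ℝ) 1) :=
      integrableOn_const measure_Ioc_lt_top.ne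
    refine stmt9_integrableOn_of_bounds measurableSet_Ioc hmeas hc (fun y hy => ?_)
    have h1 : 0 ≤ L * y ^ (-α) := by
      have := Real.rpow_nonneg hy.1.le (-α); positivity
    have h2 : Real.exp (-(L * y ^ (-α))) ≤ 1 := stmt9_exp_neg_le_one h1
    rw [neg_mul, abs_le]
    constructor <;> nlinarith [Real.exp_pos (-(L * y ^ (-α)))]
  · have hc : IntegrableOn (fun y : ℝ => L * y ^ (-α)) (Ioi (1:ℝ)) :=
      (integrableOn_Ioi_rpow_of_lt (by linarith : -α < -1) one_pos).const_mul L
    refine stmt9_integrableOn_of_bounds measurableSet_Ioi hmeas hc (fun y hy => ?_)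
    have hy0 : (0:ℝ) < y := lt_trans one_pos hy
    have h1 : 0 ≤ y ^ (-α) := Real.rpow_nonneg hy0.le _
    have h2 : Real.exp (-(L * y ^ (-α))) ≤ 1 := stmt9_exp_neg_le_one (by positivity)
    have h3 : 1 - Real.exp (-(L * y ^ (-α))) ≤ L * y ^ (-α) := by
      have := Real.add_one_le_exp (-(L * y ^ (-α))); linarith
    rw [neg_mul, abs_le]
    constructor <;> nlinarith [Real.exp_pos (-(L * y ^ (-α)))]

private lemma stmt9_k_integrable {α L : ℝ} (hα : 1 < α) (hL : 0 < L) :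
    IntegrableOn (fun y : ℝ => y ^ (-α) * Real.exp (-L * y ^ (-α))) (Ioi (0:ℝ)) := by
  have hmeas : Measurable (fun y : ℝ => y ^ (-α) * Real.exp (-L * y ^ (-α))) := by fun_prop
  rw [← Ioc_union_Ioi_eq_Ioi (zero_le_one (α := ℝ))]
  apply IntegrableOn.union
  · have hc : IntegrableOn (fun _ : ℝ => (4 / L ^ 2 : ℝ)) (Ioc (0:ℝ) 1) :=
      integrableOn_const measure_Ioc_lt_top.ne
    refine stmt9_integrableOn_of_bounds measurableSet_Ioc hmeas hc (fun y hy => ?_)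
    set t := y ^ (-α) with ht
    have hy0 : 0 < y := hy.1
    have ht1 : 1 ≤ t := Real.one_le_rpow_of_pos_of_le_one_of_nonpos hy0 hy.2 (by linarith)
    have ht0 : 0 < t := lt_of_lt_of_le one_pos ht1
    have h1 : L * t / 2 ≤ Real.exp (L * t / 2) := by
      have := Real.add_one_le_exp (L * t / 2); linarith
    have h2 : (L * t / 2) ^ 2 ≤ Real.exp (L * t) := by
      have h := mul_le_mul h1 h1 (by positivity) (Real.exp_pos _).le
      rw [← Real.exp_add] at h
      calc (L*t/2)^2 = (L*t/2)*(L*t/2) := by ring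
        _ ≤ Real.exp (L*t/2 + L*t/2) := h
        _ = Real.exp (L*t) := by norm_num
    have h3 : t * Real.exp (-(L * t)) ≤ 4 / L ^ 2 := by
      have hel : 0 < Real.exp (L * t) := Real.exp_pos _
      rw [Real.exp_neg]
      have key : t ≤ 4 / L ^ 2 * Real.exp (L * t) := by
        rw [div_mul_eq_mul_div, le_div_iff₀ (by positivity)]
        nlinarith
      calc t * (Real.exp (L * t))⁻¹ ≤ (4 / L ^ 2 * Real.exp (L * t)) * (Real.exp (L * t))⁻¹ :=
            mul_le_mul_of_nonneg_right key (inv_nonneg.mpr hel.le)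
        _ = 4 / L ^ 2 := by field_simp
    rw [neg_mul, abs_of_nonneg (by positivity)]
    exact h3
  · have hc : IntegrableOn (fun y : ℝ => y ^ (-α)) (Ioi (1:ℝ)) :=
      integrableOn_Ioi_rpow_of_lt (by linarith : -α < -1) one_pos
    refine stmt9_integrableOn_of_bounds measurableSet_Ioi hmeas hc (fun y hy => ?_)
    have hy0 : (0:ℝ) < y := lt_trans one_pos hy
    have h1 : 0 ≤ y ^ (-α) := Real.rpow_nonneg hy0.le _
    have h2 : Real.exp (-(L * y ^ (-α))) ≤ 1 := stmt9_exp_neg_le_one (by positivity)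
    rw [neg_mul, abs_of_nonneg (by positivity)]
    nlinarith

private lemma stmt9_integral_value {α L : ℝ} (hα : 1 < α) (hL : 0 < L) :
    ∫ y in Ioi (0:ℝ), (1 - Real.exp (-L * y ^ (-α)))
      = L ^ (1/α) * Real.Gamma ((α-1)/α) := by
  have g_int := stmt9_g_integrable hα hL
  have k_int := stmt9_k_integrable hα hL
  have hα0 : (0:ℝ) < α := lt_trans one_pos hα
  set G : ℝ → ℝ := fun y => y * (1 - Real.exp (-L * y ^ (-α))) with hG
  have hderiv : ∀ y ∈ Ioi (0:ℝ), HasDerivAt G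
      ((1 - Real.exp (-L * y ^ (-α))) - L * α * (y ^ (-α) * Real.exp (-L * y ^ (-α)))) y := by
    intro y hy
    have hy0 : (0:ℝ) < y := hy
    have h1 : HasDerivAt (fun y : ℝ => y ^ (-α)) (-α * y ^ (-α - 1)) y :=
      Real.hasDerivAt_rpow_const (Or.inl hy0.ne')
    have h2 : HasDerivAt (fun y : ℝ => -L * y ^ (-α)) (-L * (-α * y ^ (-α - 1))) y :=
      h1.const_mul (-L)
    have h3 : HasDerivAt (fun y : ℝ => Real.exp (-L * y ^ (-α)))
        (Real.exp (-L * y ^ (-α)) * (-L * (-α * y ^ (-α - 1)))) y := h2.exp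
    have h4 : HasDerivAt (fun y : ℝ => 1 - Real.exp (-L * y ^ (-α)))
        (0 - Real.exp (-L * y ^ (-α)) * (-L * (-α * y ^ (-α - 1)))) y :=
      (hasDerivAt_const y (1:ℝ)).sub h3
    have h5 := (hasDerivAt_id y).mul h4
    have hyr : y * y ^ (-α - 1) = y ^ (-α) := by
      have h := (Real.rpow_add hy0 1 (-α - 1)).symm
      rw [Real.rpow_one] at h
      rw [h]; norm_num
    convert h5 using 1
    · rfl
    · rfl
    · rfl
    simp only [id_eq, one_mul]
    linear_combination (L * α * Real.exp (-L * y ^ (-α))) * hyr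
  have hG0 : G 0 = 0 := by simp [hG]
  have hcont : ContinuousWithinAt G (Ici (0:ℝ)) 0 := by
    rw [ContinuousWithinAt, hG0]
    apply squeeze_zero_norm' (a := fun y : ℝ => |y|)
    · filter_upwards [eventually_mem_nhdsWithin] with y (hy : y ∈ Ici (0:ℝ))
      have h1 : 0 ≤ y ^ (-α) := Real.rpow_nonneg hy _
      have h2 : Real.exp (-(L * y ^ (-α))) ≤ 1 := stmt9_exp_neg_le_one (by positivity)
      have h3 : 0 < Real.exp (-(L * y ^ (-α))) := Real.exp_pos _
      rw [hG, Real.norm_eq_abs]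
      simp only
      rw [abs_mul, neg_mul]
      calc |y| * |1 - Real.exp (-(L * y ^ (-α)))| ≤ |y| * 1 := by
            apply mul_le_mul_of_nonneg_left _ (abs_nonneg y)
            rw [abs_le]; constructor <;> nlinarith
        _ = |y| := mul_one _
    · exact (continuous_abs.tendsto' 0 0 abs_zero).mono_left nhdsWithin_le_nhds
  have htop : Tendsto G atTop (𝓝 0) := by
    apply squeeze_zero_norm' (a := fun y : ℝ => L * y ^ (1 - α))
    · filter_upwards [eventually_gt_atTop (0:ℝ)] with y hy
      have h1 : 0 ≤ y ^ (-α) := Real.rpow_nonneg hy.le _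
      have h2 : Real.exp (-(L * y ^ (-α))) ≤ 1 := stmt9_exp_neg_le_one (by positivity)
      have h3 : 0 < Real.exp (-(L * y ^ (-α))) := Real.exp_pos _
      have h4 : 1 - Real.exp (-(L * y ^ (-α))) ≤ L * y ^ (-α) := by
        have := Real.add_one_le_exp (-(L * y ^ (-α))); linarith
      have hyr : y * y ^ (-α) = y ^ (1 - α) := by
        have h := (Real.rpow_add hy 1 (-α)).symm
        rw [Real.rpow_one] at h
        rw [show (1:ℝ) - α = 1 + -α by ring, ← h]
      rw [hG, Real.norm_eq_abs]
      simp only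
      rw [abs_mul, neg_mul, abs_of_pos hy]
      calc y * |1 - Real.exp (-(L * y ^ (-α)))| ≤ y * (L * y ^ (-α)) := by
            apply mul_le_mul_of_nonneg_left _ hy.le
            rw [abs_le]; constructor <;> nlinarith
        _ = L * y ^ (1 - α) := by rw [← hyr]; ring
    · have := (tendsto_rpow_neg_atTop (by linarith : (0:ℝ) < α - 1)).const_mul L
      rw [mul_zero] at this
      simpa [show -(α - 1) = 1 - α by ring] using this
  have f'int : IntegrableOn (fun y : ℝ =>
      (1 - Real.exp (-L * y ^ (-α))) - L * α * (y ^ (-α) * Real.exp (-L * y ^ (-α))))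
      (Ioi (0:ℝ)) := g_int.sub (k_int.const_mul (L * α))
  have hzero := integral_Ioi_of_hasDerivAt_of_tendsto hcont hderiv f'int htop
  rw [hG0, sub_zero] at hzero
  rw [integral_sub g_int (k_int.const_mul (L * α)), integral_const_mul] at hzero
  have hsplit : ∫ y in Ioi (0:ℝ), (1 - Real.exp (-L * y ^ (-α)))
      = L * α * ∫ y in Ioi (0:ℝ), y ^ (-α) * Real.exp (-L * y ^ (-α)) := by linarith
  have hsub := integral_comp_rpow_Ioi
    (fun y : ℝ => y ^ (-α) * Real.exp (-L * y ^ (-α))) (p := -1) (by norm_num)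
  have hLHS : ∫ x in Ioi (0:ℝ), (|(-1:ℝ)| * x ^ ((-1:ℝ) - 1)) •
        ((x ^ (-1:ℝ)) ^ (-α) * Real.exp (-L * (x ^ (-1:ℝ)) ^ (-α)))
      = ∫ x in Ioi (0:ℝ), x ^ (α - 2) * Real.exp (-L * x ^ α) := by
    apply setIntegral_congr_fun measurableSet_Ioi
    intro x hx
    have hx0 : (0:ℝ) < x := hx
    have e1 : (x ^ (-1:ℝ)) ^ (-α) = x ^ α := by
      rw [← Real.rpow_mul hx0.le]; norm_num
    have e2 : x ^ ((-1:ℝ) - 1) * x ^ α = x ^ (α - 2) := by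
      rw [← Real.rpow_add hx0]; norm_num; ring_nf
    simp only [e1, abs_neg, abs_one, one_mul, smul_eq_mul]
    rw [show x ^ ((-1:ℝ) - 1) * (x ^ α * Real.exp (-L * x ^ α))
        = (x ^ ((-1:ℝ) - 1) * x ^ α) * Real.exp (-L * x ^ α) by ring, e2]
  rw [← hsub, hLHS] at hsplit
  rw [integral_rpow_mul_exp_neg_mul_rpow hα0 (by linarith : (-1:ℝ) < α - 2) hL] at hsplit
  rw [hsplit]
  have hfix : α - 2 + 1 = α - 1 := by ring
  rw [hfix]
  have hpow : L * L ^ (-(α - 1) / α) = L ^ (1 / α) := by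
    nth_rewrite 1 [← Real.rpow_one L]
    rw [← Real.rpow_add hL]
    congr 1
    field_simp
    ring
  calc L * α * (L ^ (-(α - 1) / α) * (1 / α) * Real.Gamma ((α - 1) / α))
      = (L * L ^ (-(α - 1) / α)) * (α * (1/α)) * Real.Gamma ((α - 1) / α) := by ring
    _ = L ^ (1/α) * Real.Gamma ((α - 1) / α) := by
        rw [hpow, mul_one_div_cancel hα0.ne', mul_one]

theorem stmt_9_aux (α L : ℝ) (hα : 1 < α) (hL : 0 < L) (m : ℝ → ℝ)
    (hm_range : ∀ x, m x ∈ Set.Icc (0 : ℝ) 1)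
    (hm_anti : Antitone m)
    (hm_lim : Tendsto (fun x : ℝ => x ^ α * m x) atTop (𝓝 L)) :
    Tendsto (fun n : ℕ =>
        (n : ℝ) ^ (-(1 / α)) * ∫ x in Set.Ioi (1 : ℝ), (1 - (1 - m x) ^ n))
      atTop (𝓝 (L ^ (1 / α) * Real.Gamma ((α - 1) / α))) := by
  have hα0 : (0:ℝ) < α := lt_trans one_pos hα
  set c : ℕ → ℝ := fun n => (n : ℝ) ^ (1/α) with hc
  have hcn_pos : ∀ n : ℕ, 1 ≤ n → 0 < c n := by
    intro n hn
    exact Real.rpow_pos_of_pos (by exact_mod_cast hn) _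
  set F : ℕ → ℝ → ℝ := fun n y =>
    (Set.Ioi (c n)⁻¹).indicator (fun y => 1 - (1 - m (c n * y)) ^ n) y with hF
  set f : ℝ → ℝ := fun y => 1 - Real.exp (-L * y ^ (-α)) with hf
  obtain ⟨X0, hX1, hX0⟩ : ∃ X0 : ℝ, 1 ≤ X0 ∧ ∀ x, X0 ≤ x → m x ≤ 2 * L * x ^ (-α) := by
    have hev : ∀ᶠ x : ℝ in atTop, x ^ α * m x ≤ 2 * L :=
      hm_lim.eventually (eventually_le_nhds (by linarith))
    rw [eventually_atTop] at hev
    obtain ⟨X', hX'⟩ := hev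
    refine ⟨max X' 1, le_max_right _ _, fun x hx => ?_⟩
    have hx1 : (1:ℝ) ≤ x := le_trans (le_max_right _ _) hx
    have hx0 : (0:ℝ) < x := lt_of_lt_of_le one_pos hx1
    have h := hX' x (le_trans (le_max_left _ _) hx)
    have hmul : x ^ α * x ^ (-α) = 1 := by
      rw [← Real.rpow_add hx0]; simp
    have hmx : m x = (x ^ α * m x) * x ^ (-α) := by
      have h2 : m x * (x ^ α * x ^ (-α)) = (x ^ α * m x) * x ^ (-α) := by ring
      rw [hmul, mul_one] at h2
      exact h2
    rw [hmx]
    exact mul_le_mul_of_nonneg_right h (Real.rpow_nonneg hx0.le _)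
  set bound : ℝ → ℝ := fun y => if y ≤ 1 then 1 else 2 * L * y ^ (-α) with hbound
  have bound_int : IntegrableOn bound (Ioi (0:ℝ)) := by
    rw [← Ioc_union_Ioi_eq_Ioi (zero_le_one (α := ℝ))]
    apply IntegrableOn.union
    · have hc1 : IntegrableOn (fun _ : ℝ => (1:ℝ)) (Ioc (0:ℝ) 1) :=
        integrableOn_const measure_Ioc_lt_top.ne
      apply hc1.congr_fun _ measurableSet_Ioc
      intro y hy
      simp only [hbound]
      rw [if_pos hy.2]
    · have hc2 : IntegrableOn (fun y : ℝ => 2 * L * y ^ (-α)) (Ioi (1:ℝ)) :=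
        (integrableOn_Ioi_rpow_of_lt (by linarith : -α < -1) one_pos).const_mul (2*L)
      apply hc2.congr_fun _ measurableSet_Ioi
      intro y hy
      simp only [hbound]
      rw [if_neg (not_le.mpr (hy : 1 < y))]
  have hm_meas : Measurable m := hm_anti.measurable
  have hF_meas : ∀ n : ℕ, AEStronglyMeasurable (F n) (volume.restrict (Ioi (0:ℝ))) := by
    intro n
    apply Measurable.aestronglyMeasurable
    apply Measurable.indicator _ measurableSet_Ioi
    exact (measurable_const.sub
      ((measurable_const.sub (hm_meas.comp (measurable_const_mul (c n)))).pow_const n))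
  have h_bound : ∀ᶠ n : ℕ in atTop, ∀ᵐ y ∂(volume.restrict (Ioi (0:ℝ))),
      ‖F n y‖ ≤ bound y := by
    have hcast : Tendsto (fun n : ℕ => (n:ℝ)) atTop atTop := tendsto_natCast_atTop_atTop
    filter_upwards [hcast.eventually_ge_atTop (X0 ^ α), eventually_ge_atTop 1] with n hnX hn1
    have hcn : 0 < c n := hcn_pos n hn1
    have hn0 : (0:ℝ) < n := by exact_mod_cast hn1
    have hcnX : X0 ≤ c n := by
      have h1 : (X0 ^ α) ^ (1/α) ≤ (n:ℝ) ^ (1/α) :=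
        Real.rpow_le_rpow (by positivity) hnX (by positivity)
      rwa [← Real.rpow_mul (by positivity : (0:ℝ) ≤ X0), mul_one_div_cancel hα0.ne',
        Real.rpow_one] at h1
    rw [ae_restrict_iff' measurableSet_Ioi]
    filter_upwards with y hy
    have hy0 : (0:ℝ) < y := hy
    have hbnn : 0 ≤ bound y := by
      simp only [hbound]
      split_ifs
      · norm_num
      · have := Real.rpow_nonneg hy0.le (-α); positivity
    by_cases hmem : y ∈ Ioi (c n)⁻¹
    · simp only [hF, Set.indicator_of_mem hmem]
      have hx1 : 1 < c n * y := by
        calc (1:ℝ) = c n * (c n)⁻¹ := (mul_inv_cancel₀ hcn.ne').symm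
          _ < c n * y := mul_lt_mul_of_pos_left (mem_Ioi.mp hmem) hcn
      have hm0 := (hm_range (c n * y)).1
      have hm1 := (hm_range (c n * y)).2
      have hpow0 : 0 ≤ (1 - m (c n * y))^n := pow_nonneg (by linarith) n
      have hpow1 : (1 - m (c n * y))^n ≤ 1 := pow_le_one₀ (by linarith) (by linarith)
      rw [Real.norm_eq_abs, abs_of_nonneg (by linarith)]
      by_cases hy1 : y ≤ 1
      · simp only [hbound]
        rw [if_pos hy1]; linarith
      · simp only [hbound]
        rw [if_neg hy1]
        push_neg at hy1
        have hbern : 1 + (n:ℝ) * (-(m (c n * y))) ≤ (1 + (-(m (c n * y))))^n :=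
          one_add_mul_le_pow (by linarith) n
        have h1 : 1 - (1 - m (c n * y))^n ≤ (n:ℝ) * m (c n * y) := by
          have he : (1 + -(m (c n * y))) = 1 - m (c n * y) := by ring
          rw [he] at hbern; linarith
        have hxX : X0 ≤ c n * y := le_trans hcnX (by nlinarith)
        have h2 : m (c n * y) ≤ 2 * L * (c n * y) ^ (-α) := hX0 _ hxX
        have h3 : (n:ℝ) * m (c n * y) ≤ (n:ℝ) * (2 * L * (c n * y) ^ (-α)) :=
          mul_le_mul_of_nonneg_left h2 (Nat.cast_nonneg n)
        have h4 : (c n * y) ^ (-α) = (c n) ^ (-α) * y ^ (-α) :=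
          Real.mul_rpow hcn.le hy0.le
        have h5 : (c n) ^ (-α) = ((n:ℝ))⁻¹ := by
          simp only [hc]
          rw [← Real.rpow_mul (Nat.cast_nonneg n),
            show (1/α) * (-α) = -1 by field_simp, Real.rpow_neg_one]
        calc 1 - (1 - m (c n * y))^n ≤ (n:ℝ) * (2 * L * (c n * y) ^ (-α)) := le_trans h1 h3
          _ = 2 * L * y ^ (-α) * ((n:ℝ) * ((n:ℝ))⁻¹) := by rw [h4, h5]; ring
          _ = 2 * L * y ^ (-α) := by rw [mul_inv_cancel₀ hn0.ne', mul_one]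
    · simp only [hF, Set.indicator_of_notMem hmem]
      rw [norm_zero]
      exact hbnn
  have h_lim : ∀ᵐ y ∂(volume.restrict (Ioi (0:ℝ))),
      Tendsto (fun n : ℕ => F n y) atTop (𝓝 (f y)) := by
    rw [ae_restrict_iff' measurableSet_Ioi]
    filter_upwards with y hy
    have hy0 : (0:ℝ) < y := hy
    have hcy : Tendsto (fun n : ℕ => c n * y) atTop atTop := by
      apply Tendsto.atTop_mul_const hy0
      exact (tendsto_rpow_atTop (by positivity : (0:ℝ) < 1/α)).comp tendsto_natCast_atTop_atTop
    have h1 : Tendsto (fun n : ℕ => (c n * y) ^ α * m (c n * y)) atTop (𝓝 L) :=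
      hm_lim.comp hcy
    have h2 : Tendsto (fun n : ℕ => (n:ℝ) * m (c n * y)) atTop (𝓝 (L * y ^ (-α))) := by
      have h3 := h1.mul_const (y ^ (-α))
      apply h3.congr'
      filter_upwards [eventually_ge_atTop 1] with n hn
      have hcn := hcn_pos n hn
      have e1 : (c n * y) ^ α = (n:ℝ) * y ^ α := by
        rw [Real.mul_rpow hcn.le hy0.le]
        simp only [hc]
        rw [← Real.rpow_mul (Nat.cast_nonneg n), one_div_mul_cancel hα0.ne', Real.rpow_one]
      have e2 : y ^ α * y ^ (-α) = 1 := by rw [← Real.rpow_add hy0]; simp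
      calc (c n * y)^α * m (c n * y) * y^(-α)
          = (n:ℝ) * m (c n * y) * (y^α * y^(-α)) := by rw [e1]; ring
        _ = (n:ℝ) * m (c n * y) := by rw [e2, mul_one]
    have h4 : Tendsto (fun n : ℕ => (1 - m (c n * y))^n) atTop
        (𝓝 (Real.exp (-(L * y^(-α))))) :=
      stmt9_pow_tendsto_exp (fun n => m (c n * y)) _ (fun n => (hm_range _).1)
        (fun n => (hm_range _).2) h2
    have h5 : Tendsto (fun n : ℕ => 1 - (1 - m (c n * y))^n) atTop
        (𝓝 (1 - Real.exp (-(L * y^(-α))))) := tendsto_const_nhds.sub h4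
    have hcinv : Tendsto (fun n : ℕ => (c n)⁻¹) atTop (𝓝 0) :=
      tendsto_inv_atTop_zero.comp
        ((tendsto_rpow_atTop (by positivity : (0:ℝ) < 1/α)).comp tendsto_natCast_atTop_atTop)
    have hev : ∀ᶠ n : ℕ in atTop, (c n)⁻¹ < y := hcinv.eventually (gt_mem_nhds hy0)
    simp only [hf]
    rw [show -L * y^(-α) = -(L * y^(-α)) by ring]
    apply h5.congr'
    filter_upwards [hev] with n hn
    simp only [hF, Set.indicator_of_mem (mem_Ioi.mpr hn)]
  have key : Tendsto (fun n : ℕ => ∫ y in Ioi (0:ℝ), F n y) atTop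
      (𝓝 (∫ y in Ioi (0:ℝ), f y)) :=
    tendsto_integral_filter_of_dominated_convergence bound
      (Eventually.of_forall hF_meas) h_bound bound_int h_lim
  have hval : ∫ y in Ioi (0:ℝ), f y = L ^ (1/α) * Real.Gamma ((α-1)/α) := by
    simp only [hf]
    exact stmt9_integral_value hα hL
  rw [hval] at key
  apply key.congr'
  filter_upwards [eventually_ge_atTop 1] with n hn
  have hcn : 0 < c n := hcn_pos n hn
  have e1 : ∫ y in Ioi (0:ℝ), F n y
      = ∫ y in Ioi (c n)⁻¹, (1 - (1 - m (c n * y)) ^ n) := by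
    simp only [hF]
    rw [setIntegral_indicator measurableSet_Ioi]
    congr 1
    rw [Set.inter_eq_self_of_subset_right (Set.Ioi_subset_Ioi (by positivity))]
  have e2 : ∫ y in Ioi (c n)⁻¹, (1 - (1 - m (c n * y)) ^ n)
      = (c n)⁻¹ • ∫ x in Ioi (1:ℝ), (1 - (1 - m x) ^ n) := by
    have := integral_comp_mul_left_Ioi (fun x => 1 - (1 - m x) ^ n) (c n)⁻¹ hcn
    rw [mul_inv_cancel₀ hcn.ne'] at this
    exact this
  rw [e1, e2, smul_eq_mul]
  congr 1
  rw [Real.rpow_neg (Nat.cast_nonneg n)]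

end StmtNineAux

/-- Let `α > 1`, `L > 0`, and let `m : [1,∞) → [0,1]` be
monotonically decreasing with `x^α m(x) → L` as `x → ∞`.  Then
`n^(-1/α) ∫_1^∞ [1 - (1 - m x)^n] dx → L^(1/α) Γ((α-1)/α)` as `n → ∞`. -/
theorem stmt_9 (α L : ℝ) (hα : 1 < α) (hL : 0 < L) (m : ℝ → ℝ)
    (hm_range : ∀ x, 1 ≤ x → m x ∈ Set.Icc (0 : ℝ) 1)
    (hm_anti : AntitoneOn m (Set.Ici (1 : ℝ)))
    (hm_lim : Tendsto (fun x : ℝ => x ^ α * m x) atTop (𝓝 L)) :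
    Tendsto (fun n : ℕ =>
        (n : ℝ) ^ (-(1 / α)) * ∫ x in Set.Ioi (1 : ℝ), (1 - (1 - m x) ^ n))
      atTop (𝓝 (L ^ (1 / α) * Real.Gamma ((α - 1) / α))) := by
  set m' : ℝ → ℝ := fun x => m (max x 1) with hm'
  have hrange' : ∀ x, m' x ∈ Set.Icc (0:ℝ) 1 := fun x =>
    hm_range _ (le_max_right x 1)
  have hanti' : Antitone m' := by
    intro x y hxy
    exact hm_anti (Set.mem_Ici.mpr (le_max_right x 1)) (Set.mem_Ici.mpr (le_max_right y 1))
      (max_le_max hxy le_rfl)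
  have hlim' : Tendsto (fun x : ℝ => x ^ α * m' x) atTop (𝓝 L) := by
    apply hm_lim.congr'
    filter_upwards [eventually_ge_atTop (1:ℝ)] with x hx
    simp only [hm', max_eq_left hx]
  have hint : ∀ n : ℕ, ∫ x in Set.Ioi (1:ℝ), (1 - (1 - m x) ^ n)
      = ∫ x in Set.Ioi (1:ℝ), (1 - (1 - m' x) ^ n) := by
    intro n
    apply setIntegral_congr_fun measurableSet_Ioi
    intro x hx
    simp only [hm', max_eq_left (le_of_lt (Set.mem_Ioi.mp hx))]
  have := stmt_9_aux α L hα hL m' hrange' hanti' hlim'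
  apply this.congr
  intro n
  rw [hint n]
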